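/- Let X be a Banach space, d ≥ 1, and α a reasonable cross norm on ⊗^d X. Then the Veronese cone (𝕍^d_X, d_α), where 𝕍^d_X := {x ⊗ ⋯ ⊗ x : x ∈ X} with the metric induced by the norm of ⊗̂_α^d X, is a complete metric space. -/

import Mathlib

open scoped TensorProduct
open PiTensorProduct

noncomputable def tensorEval {𝕜 : Type*} [RCLike 𝕜] {X : Type*} [NormedAddCommGroup X]
    [NormedSpace 𝕜 X] {d : ℕ} (f : Fin d → (X →L[𝕜] 𝕜)) :
    (⨂[𝕜] (_ : Fin d), X) →ₗ[𝕜] 𝕜 :=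
  PiTensorProduct.lift
    ((MultilinearMap.mkPiAlgebra 𝕜 (Fin d) 𝕜).compLinearMap fun i => (f i).toLinearMap)

def IsNorm (𝕜 : Type*) [RCLike 𝕜] {T : Type*} [AddCommGroup T] [Module 𝕜 T]
    (N : T → ℝ) : Prop :=
  (∀ z, N z = 0 ↔ z = 0) ∧ (∀ (c : 𝕜) z, N (c • z) = ‖c‖ * N z) ∧
    ∀ z w, N (z + w) ≤ N z + N w

def IsReasonableCrossNorm {𝕜 : Type*} [RCLike 𝕜] {X : Type*} [NormedAddCommGroup X]
    [NormedSpace 𝕜 X] {d : ℕ} (N : (⨂[𝕜] (_ : Fin d), X) → ℝ) : Prop :=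
  IsNorm 𝕜 N ∧ (∀ x : Fin d → X, N (tprod 𝕜 x) ≤ ∏ i, ‖x i‖) ∧
    ∀ (f : Fin d → (X →L[𝕜] 𝕜)) (z : ⨂[𝕜] (_ : Fin d), X),
      ‖tensorEval f z‖ ≤ (∏ i, ‖f i‖) * N z

section Aux

variable {X : Type*} [NormedAddCommGroup X] [NormedSpace ℝ X] {d : ℕ}

lemma tensorEval_tprod (f : Fin d → (X →L[ℝ] ℝ)) (x : Fin d → X) :
    tensorEval f (tprod ℝ x) = ∏ i, f i (x i) := by
  simp [tensorEval]

lemma alpha_sub_comm {α : (⨂[ℝ] (_ : Fin d), X) → ℝ} (hα : IsNorm ℝ α)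
    (z w : ⨂[ℝ] (_ : Fin d), X) : α (z - w) = α (w - z) := by
  have h := hα.2.1 (-1 : ℝ) (z - w)
  simpa [neg_sub] using h.symm

lemma prod_ite_fin (i₀ : Fin d) (a b : ℝ) :
    (∏ i : Fin d, if i = i₀ then a else b) = a * b ^ (d - 1) := by
  rw [← Finset.mul_prod_erase Finset.univ _ (Finset.mem_univ i₀)]
  simp only [if_pos rfl]
  congr 1
  rw [Finset.prod_congr rfl (fun i hi => if_neg (Finset.ne_of_mem_erase hi)),
      Finset.prod_const, Finset.card_erase_of_mem (Finset.mem_univ i₀),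
      Finset.card_univ, Fintype.card_fin]

lemma alpha_pure (hd : 1 ≤ d) {α : (⨂[ℝ] (_ : Fin d), X) → ℝ}
    (hα : IsReasonableCrossNorm α) (x : X) :
    α (tprod ℝ (fun _ : Fin d => x)) = ‖x‖ ^ d := by
  refine le_antisymm (by simpa using hα.2.1 (fun _ : Fin d => x)) ?_
  by_cases hx : x = 0
  · have h0 : (tprod ℝ (fun _ : Fin d => x) : ⨂[ℝ] (_ : Fin d), X) = 0 :=
      MultilinearMap.map_coord_zero _ (⟨0, hd⟩ : Fin d) (by simp [hx])
    rw [h0, (hα.1.1 0).2 rfl, hx, norm_zero, zero_pow (by omega)]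
  · obtain ⟨g, hg1, hgx⟩ := exists_dual_vector ℝ x (norm_ne_zero_iff.mpr hx)
    have h := hα.2.2 (fun _ : Fin d => g) (tprod ℝ (fun _ : Fin d => x))
    rw [tensorEval_tprod] at h
    simp only [Finset.prod_const, Finset.card_univ, Fintype.card_fin, hg1, one_pow, one_mul,
      hgx] at h
    calc ‖x‖ ^ d = ‖(‖x‖ : ℝ) ^ d‖ := by
          rw [Real.norm_eq_abs, abs_pow, abs_norm]
      _ ≤ _ := h

lemma tprod_sign_smul (hd : 1 ≤ d) {σ : ℝ} (hσ : σ = 1 ∨ σ = -1) (y : X) :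
    (tprod ℝ (fun _ : Fin d => σ ^ (d - 1) • y) : ⨂[ℝ] (_ : Fin d), X)
      = tprod ℝ (fun _ : Fin d => y) := by
  have h := MultilinearMap.map_smul_univ (tprod ℝ (s := fun _ : Fin d => X))
    (fun _ : Fin d => σ ^ (d - 1)) (fun _ : Fin d => y)
  rw [h, Finset.prod_const, Finset.card_univ, Fintype.card_fin, ← pow_mul]
  have heven : Even ((d - 1) * d) := by
    have := Nat.even_mul_succ_self (d - 1)
    rwa [Nat.sub_add_cancel hd] at this
  rcases hσ with h1 | h1
  · rw [h1, one_pow, one_smul]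
  · rw [h1, heven.neg_one_pow, one_smul]

end Aux

section Core
variable {X : Type*} [NormedAddCommGroup X] [NormedSpace ℝ X] {d : ℕ}

lemma alpha_nonneg {α : (⨂[ℝ] (_ : Fin d), X) → ℝ} (hα : IsNorm ℝ α)
    (z : ⨂[ℝ] (_ : Fin d), X) : 0 ≤ α z := by
  have h0 : α 0 = 0 := (hα.1 0).2 rfl
  have hneg : α (-z) = α z := by
    have := hα.2.1 (-1 : ℝ) z; simpa using this
  have htri := hα.2.2 z (-z)
  rw [add_neg_cancel, h0, hneg] at htri
  linarith

lemma key_core (hd : 1 ≤ d) {α : (⨂[ℝ] (_ : Fin d), X) → ℝ}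
    (hα : IsReasonableCrossNorm α) (x y : X) (hxy : ‖y‖ ≤ ‖x‖) :
    ∃ σ : ℝ, (σ = 1 ∨ σ = -1) ∧
      ‖x - σ ^ (d - 1) • y‖ * ‖x‖ ^ (d - 1) ≤
        2 * α (tprod ℝ (fun _ : Fin d => x) - tprod ℝ (fun _ : Fin d => y)) := by
  set ε := α (tprod ℝ (fun _ : Fin d => x) - tprod ℝ (fun _ : Fin d => y)) with hε
  have hε0 : 0 ≤ ε := alpha_nonneg hα.1 _
  by_cases hx : x = 0
  · have hy : y = 0 := by
      have : ‖y‖ ≤ 0 := by simpa [hx] using hxy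
      exact norm_le_zero_iff.mp this
    refine ⟨1, Or.inl rfl, ?_⟩
    simp only [hx, hy, smul_zero, sub_zero, norm_zero, zero_mul]
    positivity
  · obtain ⟨g, hg1, hgx⟩ := exists_dual_vector ℝ x (norm_ne_zero_iff.mpr hx)
    have hgx' : g x = ‖x‖ := by exact_mod_cast hgx
    have hr0 : (0:ℝ) < ‖x‖ := norm_pos_iff.mpr hx
    obtain ⟨σ, hσpm, hσb⟩ : ∃ σ : ℝ, (σ = 1 ∨ σ = -1) ∧ g y = σ * |g y| := by
      by_cases hb : 0 ≤ g y
      · exact ⟨1, Or.inl rfl, by rw [one_mul, abs_of_nonneg hb]⟩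
      · exact ⟨-1, Or.inr rfl, by rw [abs_of_neg (lt_of_not_ge hb)]; ring⟩
    have htr : |g y| ≤ ‖x‖ := by
      calc |g y| = ‖g y‖ := (Real.norm_eq_abs _).symm
        _ ≤ ‖g‖ * ‖y‖ := g.le_opNorm y
        _ ≤ ‖x‖ := by rw [hg1, one_mul]; exact hxy
    have ht0 : (0:ℝ) ≤ |g y| := abs_nonneg _
    -- Step A
    have hA : |‖x‖ ^ d - (g y) ^ d| ≤ ε := by
      have h := hα.2.2 (fun _ : Fin d => g)
        (tprod ℝ (fun _ : Fin d => x) - tprod ℝ (fun _ : Fin d => y))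
      rw [map_sub, tensorEval_tprod, tensorEval_tprod, Finset.prod_const, Finset.prod_const,
        Finset.prod_const, Finset.card_univ, Fintype.card_fin, hgx', hg1, one_pow, one_mul,
        Real.norm_eq_abs] at h
      exact h
    -- Step A'
    have hA' : ‖x‖ ^ d - |g y| ^ d ≤ ε := by
      have hbt : (g y) ^ d ≤ |g y| ^ d := by
        calc (g y) ^ d ≤ |(g y) ^ d| := le_abs_self _
          _ = |g y| ^ d := by rw [abs_pow]
      have : ‖x‖ ^ d - (g y) ^ d ≤ ε := le_trans (le_abs_self _) hA
      linarith
    -- Step B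
    have hB : ‖x‖ * (‖x‖ ^ (d - 1) - |g y| ^ (d - 1)) ≤ ε := by
      have h1 : |g y| * |g y| ^ (d - 1) ≤ ‖x‖ * |g y| ^ (d - 1) :=
        mul_le_mul_of_nonneg_right htr (pow_nonneg ht0 _)
      have h2 : ‖x‖ * ‖x‖ ^ (d - 1) = ‖x‖ ^ d := by
        rw [← pow_succ']; congr 1; omega
      have h3 : |g y| * |g y| ^ (d - 1) = |g y| ^ d := by
        rw [← pow_succ']; congr 1; omega
      nlinarith
    have hpowle : |g y| ^ (d - 1) ≤ ‖x‖ ^ (d - 1) := pow_le_pow_left₀ ht0 htr _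
    have hσabs : |σ| = 1 := by rcases hσpm with h | h <;> simp [h]
    have hσd1 : |σ ^ (d - 1)| = 1 := by rw [abs_pow, hσabs, one_pow]
    -- Step C
    have hC : ∀ f : X →L[ℝ] ℝ, ‖f (x - σ ^ (d - 1) • y)‖ * ‖x‖ ^ (d - 1) ≤ 2 * ε * ‖f‖ := by
      intro f
      set i₀ : Fin d := ⟨0, hd⟩ with hi₀
      set F : Fin d → (X →L[ℝ] ℝ) := fun i => if i = i₀ then f else g with hF
      have hFap : ∀ (w : X) (i : Fin d), F i w = if i = i₀ then f w else g w := by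
        intro w i; by_cases hi : i = i₀ <;> simp [hF, hi]
      have hFn' : ∀ i : Fin d, ‖F i‖ = if i = i₀ then ‖f‖ else ‖g‖ := by
        intro i; by_cases hi : i = i₀ <;> simp [hF, hi]
      have hC1 : |f x * ‖x‖ ^ (d - 1) - f y * (g y) ^ (d - 1)| ≤ ‖f‖ * ε := by
        have h := hα.2.2 F (tprod ℝ (fun _ : Fin d => x) - tprod ℝ (fun _ : Fin d => y))
        rw [map_sub, tensorEval_tprod, tensorEval_tprod,
          Finset.prod_congr rfl (fun i _ => hFap x i),
          Finset.prod_congr rfl (fun i _ => hFap y i),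
          Finset.prod_congr rfl (fun i _ => hFn' i),
          prod_ite_fin, prod_ite_fin, prod_ite_fin, hgx', hg1, one_pow, mul_one,
          Real.norm_eq_abs] at h
        exact h
      have hbd1 : (g y) ^ (d - 1) = σ ^ (d - 1) * |g y| ^ (d - 1) := by
        rw [hσb, mul_pow, abs_mul, hσabs, one_mul, abs_abs]
      have hfz : f (x - σ ^ (d - 1) • y) * ‖x‖ ^ (d - 1)
          = (f x * ‖x‖ ^ (d - 1) - f y * (g y) ^ (d - 1))
            + σ ^ (d - 1) * f y * (|g y| ^ (d - 1) - ‖x‖ ^ (d - 1)) := by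
        rw [map_sub, map_smul, smul_eq_mul, hbd1]; ring
      have hfy : |f y| ≤ ‖f‖ * ‖y‖ := f.le_opNorm y
      have h2nd : |σ ^ (d - 1) * f y * (|g y| ^ (d - 1) - ‖x‖ ^ (d - 1))| ≤ ‖f‖ * ε := by
        have habs : |σ ^ (d - 1) * f y * (|g y| ^ (d - 1) - ‖x‖ ^ (d - 1))|
            = |f y| * (‖x‖ ^ (d - 1) - |g y| ^ (d - 1)) := by
          rw [abs_mul, abs_mul, hσd1, one_mul, abs_sub_comm,
            abs_of_nonneg (by linarith : (0:ℝ) ≤ ‖x‖ ^ (d - 1) - |g y| ^ (d - 1))]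
        rw [habs]
        calc |f y| * (‖x‖ ^ (d - 1) - |g y| ^ (d - 1))
            ≤ (‖f‖ * ‖x‖) * (‖x‖ ^ (d - 1) - |g y| ^ (d - 1)) := by
              apply mul_le_mul_of_nonneg_right _ (by linarith)
              calc |f y| ≤ ‖f‖ * ‖y‖ := hfy
                _ ≤ ‖f‖ * ‖x‖ := mul_le_mul_of_nonneg_left hxy (norm_nonneg f)
          _ = ‖f‖ * (‖x‖ * (‖x‖ ^ (d - 1) - |g y| ^ (d - 1))) := by ring
          _ ≤ ‖f‖ * ε := mul_le_mul_of_nonneg_left hB (norm_nonneg f)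
      calc ‖f (x - σ ^ (d - 1) • y)‖ * ‖x‖ ^ (d - 1)
          = |f (x - σ ^ (d - 1) • y) * ‖x‖ ^ (d - 1)| := by
            rw [abs_mul, Real.norm_eq_abs, abs_of_nonneg (pow_nonneg hr0.le _)]
        _ ≤ |f x * ‖x‖ ^ (d - 1) - f y * (g y) ^ (d - 1)|
            + |σ ^ (d - 1) * f y * (|g y| ^ (d - 1) - ‖x‖ ^ (d - 1))| := by
            rw [hfz]; exact abs_add_le _ _
        _ ≤ ‖f‖ * ε + ‖f‖ * ε := add_le_add hC1 h2nd
        _ = 2 * ε * ‖f‖ := by ring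
    -- conclude via dual bound
    refine ⟨σ, hσpm, ?_⟩
    have hrpow : (0:ℝ) < ‖x‖ ^ (d - 1) := pow_pos hr0 _
    have hM : ‖x - σ ^ (d - 1) • y‖ ≤ 2 * ε / ‖x‖ ^ (d - 1) := by
      apply NormedSpace.norm_le_dual_bound ℝ _ (by positivity)
      intro f
      rw [div_mul_eq_mul_div, le_div_iff₀ hrpow]
      exact hC f
    calc ‖x - σ ^ (d - 1) • y‖ * ‖x‖ ^ (d - 1) ≤ (2 * ε / ‖x‖ ^ (d - 1)) * ‖x‖ ^ (d - 1) :=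
          mul_le_mul_of_nonneg_right hM hrpow.le
      _ = 2 * ε := div_mul_cancel₀ _ hrpow.ne'

end Core
section Rest
variable {X : Type*} [NormedAddCommGroup X] [NormedSpace ℝ X] {d : ℕ}

lemma key_min (hd : 1 ≤ d) {α : (⨂[ℝ] (_ : Fin d), X) → ℝ}
    (hα : IsReasonableCrossNorm α) (x y : X) :
    ∃ σ : ℝ, (σ = 1 ∨ σ = -1) ∧
      ‖x - σ ^ (d - 1) • y‖ * (min ‖x‖ ‖y‖) ^ (d - 1) ≤
        2 * α (tprod ℝ (fun _ : Fin d => x) - tprod ℝ (fun _ : Fin d => y)) := by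
  have hmin0 : (0:ℝ) ≤ min ‖x‖ ‖y‖ := le_min (norm_nonneg x) (norm_nonneg y)
  rcases le_total ‖y‖ ‖x‖ with h | h
  · obtain ⟨σ, hσpm, hle⟩ := key_core hd hα x y h
    refine ⟨σ, hσpm, le_trans ?_ hle⟩
    exact mul_le_mul_of_nonneg_left
      (pow_le_pow_left₀ hmin0 (min_le_left _ _) _) (norm_nonneg _)
  · obtain ⟨σ, hσpm, hle⟩ := key_core hd hα y x h
    refine ⟨σ, hσpm, ?_⟩
    have hss : σ ^ (d - 1) * σ ^ (d - 1) = 1 := by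
      rcases hσpm with h1 | h1
      · rw [h1, one_pow, one_mul]
      · rw [h1, ← pow_add]; exact Even.neg_one_pow ⟨d - 1, rfl⟩
    have habs : |σ ^ (d - 1)| = 1 := by
      rcases hσpm with h1 | h1 <;> simp [h1, abs_pow]
    have hkey : (-(σ ^ (d - 1))) • (y - σ ^ (d - 1) • x) = x - σ ^ (d - 1) • y := by
      rw [smul_sub, smul_smul, neg_mul, hss, neg_one_smul, neg_smul, sub_neg_eq_add,
        neg_add_eq_sub]
    have hnormeq : ‖x - σ ^ (d - 1) • y‖ = ‖y - σ ^ (d - 1) • x‖ := by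
      rw [← hkey, norm_smul, Real.norm_eq_abs, abs_neg, habs, one_mul]
    have hαcomm : α (tprod ℝ (fun _ : Fin d => y) - tprod ℝ (fun _ : Fin d => x))
        = α (tprod ℝ (fun _ : Fin d => x) - tprod ℝ (fun _ : Fin d => y)) :=
      alpha_sub_comm hα.1 _ _
    calc ‖x - σ ^ (d - 1) • y‖ * (min ‖x‖ ‖y‖) ^ (d - 1)
        ≤ ‖y - σ ^ (d - 1) • x‖ * ‖y‖ ^ (d - 1) := by
          rw [hnormeq]
          exact mul_le_mul_of_nonneg_left
            (pow_le_pow_left₀ hmin0 (min_le_right _ _) _) (norm_nonneg _)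
      _ ≤ 2 * α (tprod ℝ (fun _ : Fin d => y) - tprod ℝ (fun _ : Fin d => x)) := hle
      _ = _ := by rw [hαcomm]

lemma continuous_diag' {α : (⨂[ℝ] (_ : Fin d), X) → ℝ} (hα : IsReasonableCrossNorm α)
    {E : Type*} [NormedAddCommGroup E] [NormedSpace ℝ E]
    (ι : (⨂[ℝ] (_ : Fin d), X) →ₗ[ℝ] E) (hιiso : ∀ z, ‖ι z‖ = α z) :
    Continuous fun x : X => ι (tprod ℝ (fun _ : Fin d => x)) := by
  let M : MultilinearMap ℝ (fun _ : Fin d => X) E := ι.compMultilinearMap (tprod ℝ)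
  have hbound : ∀ m : Fin d → X, ‖M m‖ ≤ 1 * ∏ i, ‖m i‖ := by
    intro m
    rw [one_mul]
    calc ‖M m‖ = α (tprod ℝ m) := hιiso _
      _ ≤ ∏ i, ‖m i‖ := hα.2.1 m
  let CM := MultilinearMap.mkContinuous M 1 hbound
  have heq : (fun x : X => ι (tprod ℝ (fun _ : Fin d => x)))
      = fun x : X => CM (fun _ : Fin d => x) := rfl
  rw [heq]
  exact CM.cont.comp (continuous_pi fun _ => continuous_id)

end Rest

/-- the Veronese cone `(𝕍^d_X, d_α)` is a complete metric space, where the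
completion `⊗̂_α^d X` is modelled as a Banach space `E` together with a dense isometric
linear embedding `ι` of the algebraic tensor product equipped with the reasonable cross
norm `α`. -/
theorem veronese_cone_complete {X : Type*} [NormedAddCommGroup X] [NormedSpace ℝ X]
    [CompleteSpace X] {d : ℕ} (hd : 1 ≤ d)
    (α : (⨂[ℝ] (_ : Fin d), X) → ℝ) (hα : IsReasonableCrossNorm α)
    {E : Type*} [NormedAddCommGroup E] [NormedSpace ℝ E] [CompleteSpace E]
    (ι : (⨂[ℝ] (_ : Fin d), X) →ₗ[ℝ] E)
    (hιiso : ∀ z, ‖ι z‖ = α z) (hιdense : Dense (Set.range ι)) :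
    IsComplete {e : E | ∃ x : X, e = ι (tprod ℝ (fun _ : Fin d => x))} := by
  have hφ : Continuous fun x : X => ι (tprod ℝ (fun _ : Fin d => x)) :=
    continuous_diag' hα ι hιiso
  refine IsClosed.isComplete (IsSeqClosed.isClosed ?_)
  intro u e hu hue
  simp only [Set.mem_setOf_eq] at hu ⊢
  choose x hx using hu
  have hιP : ∀ n m : ℕ,
      α (tprod ℝ (fun _ : Fin d => x n) - tprod ℝ (fun _ : Fin d => x m)) = ‖u n - u m‖ := by
    intro n m
    rw [← hιiso, map_sub, ← hx n, ← hx m]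
  by_cases he : e = 0
  · refine ⟨0, ?_⟩
    have h0 : (tprod ℝ (fun _ : Fin d => (0:X)) : ⨂[ℝ] (_ : Fin d), X) = 0 :=
      MultilinearMap.map_coord_zero _ (⟨0, hd⟩ : Fin d) rfl
    rw [he, h0, map_zero]
  · have hce : 0 < ‖e‖ := norm_pos_iff.mpr he
    set c := min 1 (‖e‖ / 2) with hc
    have hc0 : 0 < c := lt_min one_pos (by positivity)
    have hc1 : c ≤ 1 := min_le_left _ _
    have hce2 : c ≤ ‖e‖ / 2 := min_le_right _ _
    have hupow : ∀ n, ‖u n‖ = ‖x n‖ ^ d := fun n => by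
      rw [hx n, hιiso, alpha_pure hd hα]
    have htend : Filter.Tendsto (fun n => ‖u n‖) Filter.atTop (nhds ‖e‖) := hue.norm
    have hev : ∀ᶠ n in Filter.atTop, ‖e‖ / 2 < ‖u n‖ :=
      htend.eventually_const_lt (by linarith)
    obtain ⟨N₁, hN₁⟩ := Filter.eventually_atTop.mp hev
    have hxc : ∀ n, N₁ ≤ n → c ≤ ‖x n‖ := by
      intro n hn
      by_contra hlt
      push_neg at hlt
      have h1 : ‖x n‖ ^ d ≤ ‖x n‖ :=
        pow_le_of_le_one (norm_nonneg _) (le_trans hlt.le hc1) (by omega)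
      have h2 := hN₁ n hn
      rw [hupow n] at h2
      linarith
    have hcau : CauchySeq u := hue.cauchySeq
    obtain ⟨N₂, hN₂⟩ := Metric.cauchySeq_iff.mp hcau (c ^ d / 4) (by positivity)
    set N := max N₁ N₂ with hN
    have hNc : ∀ n, N ≤ n → c ≤ ‖x n‖ := fun n hn =>
      hxc n (le_trans (le_max_left _ _) hn)
    have hsel : ∀ n : ℕ, ∃ z : X,
        (tprod ℝ (fun _ : Fin d => z) : ⨂[ℝ] (_ : Fin d), X)
          = tprod ℝ (fun _ : Fin d => x n) ∧ ‖z‖ = ‖x n‖ ∧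
        ‖x N - z‖ * (min ‖x N‖ ‖x n‖) ^ (d - 1) ≤ 2 * ‖u N - u n‖ := by
      intro n
      obtain ⟨σ, hσpm, hle⟩ := key_min hd hα (x N) (x n)
      rw [hιP N n] at hle
      refine ⟨σ ^ (d - 1) • x n, tprod_sign_smul hd hσpm _, ?_, hle⟩
      rw [norm_smul]
      rcases hσpm with h | h <;> simp [h, Real.norm_eq_abs, abs_pow]
    choose z hz1 hz2 hz3 using hsel
    have huz : ∀ n, u n = ι (tprod ℝ (fun _ : Fin d => z n)) := fun n => by
      rw [hx n, hz1 n]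
    have hzc : ∀ n, N ≤ n → ‖x N - z n‖ ≤ c / 2 := by
      intro n hn
      have hmin : c ≤ min ‖x N‖ ‖x n‖ := le_min (hNc N le_rfl) (hNc n hn)
      have h3 := hz3 n
      have hun : ‖u N - u n‖ < c ^ d / 4 := by
        rw [← dist_eq_norm]
        exact hN₂ N (le_max_right _ _) n (le_trans (le_max_right _ _) hn)
      have hpow : c ^ (d - 1) ≤ (min ‖x N‖ ‖x n‖) ^ (d - 1) :=
        pow_le_pow_left₀ hc0.le hmin _
      have hcd : c ^ d = c * c ^ (d - 1) := by rw [← pow_succ']; congr 1; omega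
      nlinarith [mul_le_mul_of_nonneg_left hpow (norm_nonneg (x N - z n)),
        pow_pos hc0 (d - 1), norm_nonneg (x N - z n)]
    have hwC : CauchySeq (fun k => z (N + k)) := by
      rw [Metric.cauchySeq_iff]
      intro η hη
      obtain ⟨M₀, hM₀⟩ := Metric.cauchySeq_iff.mp hcau (min η c * c ^ (d - 1) / 2)
        (by positivity)
      refine ⟨M₀, fun k hk l hl => ?_⟩
      set n := N + k with hn
      set m := N + l with hm
      have hnN : N ≤ n := Nat.le_add_right _ _
      have hmN : N ≤ m := Nat.le_add_right _ _
      have hnM : M₀ ≤ n := le_trans hk (Nat.le_add_left _ _)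
      have hmM : M₀ ≤ m := le_trans hl (Nat.le_add_left _ _)
      obtain ⟨τ, hτpm, hτle⟩ := key_min hd hα (z n) (z m)
      rw [hz1 n, hz1 m, hιP n m] at hτle
      have hminz : c ≤ min ‖z n‖ ‖z m‖ := by
        rw [hz2 n, hz2 m]
        exact le_min (hNc n hnN) (hNc m hmN)
      have hum : ‖u n - u m‖ < min η c * c ^ (d - 1) / 2 := by
        rw [← dist_eq_norm]
        exact hM₀ n hnM m hmM
      have hp : (0:ℝ) < c ^ (d - 1) := pow_pos hc0 _
      have hτ'' : ‖z n - τ ^ (d - 1) • z m‖ < min η c := by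
        have hpow : c ^ (d - 1) ≤ (min ‖z n‖ ‖z m‖) ^ (d - 1) :=
          pow_le_pow_left₀ hc0.le hminz _
        nlinarith [mul_le_mul_of_nonneg_left hpow (norm_nonneg (z n - τ ^ (d - 1) • z m)),
          norm_nonneg (z n - τ ^ (d - 1) • z m)]
      have hs : τ ^ (d - 1) = 1 ∨ τ ^ (d - 1) = -1 := by
        rcases hτpm with h | h
        · left; rw [h, one_pow]
        · rw [h]
          rcases Nat.even_or_odd (d - 1) with hpar | hpar
          · left; exact hpar.neg_one_pow
          · right; exact hpar.neg_one_pow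
      rcases hs with hs | hs
      · rw [hs, one_smul] at hτ''
        rw [dist_eq_norm]
        exact lt_of_lt_of_le hτ'' (min_le_left _ _)
      · exfalso
        rw [hs, neg_one_smul, sub_neg_eq_add] at hτ''
        have h1 : ‖x N - z n‖ ≤ c / 2 := hzc n hnN
        have h2 : ‖x N - z m‖ ≤ c / 2 := hzc m hmN
        have hxNc : c ≤ ‖x N‖ := hNc N le_rfl
        have hsum : x N + x N = (z n + z m) + ((x N - z n) + (x N - z m)) := by abel
        have h2norm : 2 * ‖x N‖ = ‖x N + x N‖ := by
          rw [← two_smul ℝ, norm_smul]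
          simp
        have hlow : 2 * ‖x N‖ ≤ ‖z n + z m‖ + (‖x N - z n‖ + ‖x N - z m‖) := by
          rw [h2norm, hsum]
          exact le_trans (norm_add_le _ _)
            (add_le_add_right (norm_add_le _ _) _)
        have hηc : min η c ≤ c := min_le_right _ _
        linarith
    obtain ⟨xlim, hxlim⟩ := cauchySeq_tendsto_of_complete hwC
    refine ⟨xlim, ?_⟩
    have hmono : Filter.Tendsto (fun k => N + k) Filter.atTop Filter.atTop := by
      simpa [Nat.add_comm] using Filter.tendsto_add_atTop_nat N
    have h1 : Filter.Tendsto (fun k => u (N + k)) Filter.atTop (nhds e) :=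
      hue.comp hmono
    have h2 : Filter.Tendsto (fun k => u (N + k)) Filter.atTop
        (nhds (ι (tprod ℝ (fun _ : Fin d => xlim)))) := by
      have h3 := (hφ.tendsto xlim).comp hxlim
      exact h3.congr fun k => (huz (N + k)).symm
    exact tendsto_nhds_unique h1 h2
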